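/- For k ≥ 2 and f, g ∈ Z_{2^k}[x], if f and g are in the same connected component of the involutory Cayley graph of Z_{2^k}[x], then for every i ≥ 1 the difference of the i-th coefficients of f and g is divisible by 2^{k-1} in Z_{2^k}. -/

import Mathlib

lemma ann2 (k : ℕ) (hk : 1 ≤ k) (x : ZMod (2^k)) (hx : 2 * x = 0) :
    (2^(k-1) : ZMod (2^k)) ∣ x := by
  haveI : NeZero (2^k) := ⟨by positivity⟩
  have h1 : ((2 * x.val : ℕ) : ZMod (2^k)) = 0 := by
    push_cast [ZMod.natCast_val, ZMod.cast_id]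
    simpa using hx
  rw [ZMod.natCast_eq_zero_iff] at h1
  have h2 : 2^(k-1) ∣ x.val := by
    have : 2 * 2^(k-1) ∣ 2 * x.val := by
      rwa [← pow_succ', Nat.sub_add_cancel hk]
    exact (mul_dvd_mul_iff_left (by norm_num : (2:ℕ) ≠ 0)).mp this
  obtain ⟨c, hc⟩ := h2
  refine ⟨(c : ZMod (2^k)), ?_⟩
  have hx2 : x = ((2^(k-1)*c : ℕ) : ZMod (2^k)) := by
    rw [← hc, ZMod.natCast_val, ZMod.cast_id]
  rw [hx2]; push_cast; ring

lemma sq_one_coeff (k : ℕ) (hk : 2 ≤ k) (h : Polynomial (ZMod (2^k)))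
    (hh : h^2 = 1) : ∀ i, 1 ≤ i → (2^(k-1) : ZMod (2^k)) ∣ h.coeff i := by
  have hc0 : h.coeff 0 * h.coeff 0 = 1 := by
    have := congrArg (fun p => Polynomial.coeff p 0) hh
    simpa [pow_two, Polynomial.mul_coeff_zero] using this
  have hzz : (2^(k-1) : ZMod (2^k)) * 2^(k-1) = 0 := by
    have : ((2^(k-1) * 2^(k-1) : ℕ) : ZMod (2^k)) = 0 := by
      rw [ZMod.natCast_eq_zero_iff, ← pow_add]
      exact pow_dvd_pow 2 (by omega)
    push_cast at this
    exact this
  intro i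
  induction i using Nat.strong_induction_on with
  | _ i IH =>
    intro hi
    have hsum : ∑ x ∈ Finset.HasAntidiagonal.antidiagonal i, h.coeff x.1 * h.coeff x.2 = 0 := by
      rw [← Polynomial.coeff_mul, ← sq, hh, Polynomial.coeff_one]
      rw [if_neg (by omega : ¬ i = 0)]
    have hm1 : ((0,i) : ℕ × ℕ) ∈ Finset.HasAntidiagonal.antidiagonal i := by simp
    rw [← Finset.add_sum_erase _ _ hm1] at hsum
    have hm2 : ((i,0) : ℕ × ℕ) ∈ (Finset.HasAntidiagonal.antidiagonal i).erase (0,i) := by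
      simp; omega
    rw [← Finset.add_sum_erase _ _ hm2] at hsum
    have hrest : ∑ x ∈ ((Finset.HasAntidiagonal.antidiagonal i).erase (0,i)).erase (i,0),
        h.coeff x.1 * h.coeff x.2 = 0 := by
      apply Finset.sum_eq_zero
      intro x hx
      simp only [Finset.mem_erase, Finset.HasAntidiagonal.mem_antidiagonal] at hx
      obtain ⟨hx1, hx2, hx3⟩ := hx
      have ha : x.1 ≠ 0 := by
        intro h0; apply hx2; rw [Prod.ext_iff]; constructor <;> simp [h0] <;> omega
      have hb : x.2 ≠ 0 := by
        intro h0; apply hx1; rw [Prod.ext_iff]; constructor <;> simp [h0] <;> omega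
      obtain ⟨c1, hc1⟩ := IH x.1 (by omega) (by omega)
      obtain ⟨c2, hc2⟩ := IH x.2 (by omega) (by omega)
      rw [hc1, hc2]
      calc 2^(k-1) * c1 * (2^(k-1) * c2) = (2^(k-1) * 2^(k-1)) * (c1 * c2) := by ring
        _ = 0 := by rw [hzz, zero_mul]
    rw [hrest, add_zero] at hsum
    have htwo : 2 * (h.coeff 0 * h.coeff i) = 0 := by
      simp only at hsum; linear_combination hsum
    have h2i : 2 * h.coeff i = 0 := by
      linear_combination h.coeff 0 * htwo - 2 * h.coeff i * hc0
    exact ann2 k (by omega) _ h2i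

/-- The involutory Cayley graph of a commutative ring: `a ~ b` iff `(a - b)^2 = 1`. -/
def invCayley (R : Type*) [CommRing R] : SimpleGraph R :=
  SimpleGraph.fromRel (fun a b => (a - b)^2 = 1)

theorem coeff_diff_of_reachable (k : ℕ) (hk : 2 ≤ k)
    (f g : Polynomial (ZMod (2^k)))
    (h : (invCayley (Polynomial (ZMod (2^k)))).Reachable f g) :
    ∀ i, 1 ≤ i → (2^(k-1) : ZMod (2^k)) ∣ (f.coeff i - g.coeff i) := by
  obtain ⟨w⟩ := h
  induction w with
  | nil => intro i hi; simp
  | cons hadj w IH =>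
    rename_i u v p
    intro i hi
    rw [invCayley, SimpleGraph.fromRel_adj] at hadj
    have hsq : (u - v)^2 = 1 := by
      rcases hadj.2 with h1 | h1
      · exact h1
      · rw [← neg_sub]; rw [neg_pow]; simp [h1]
    have h1 := sq_one_coeff k hk (u - v) hsq i hi
    rw [Polynomial.coeff_sub] at h1
    have h2 := IH i hi
    have heq : u.coeff i - p.coeff i =
        (u.coeff i - v.coeff i) + (v.coeff i - p.coeff i) := by ring
    rw [heq]
    exact dvd_add h1 h2
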